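/- Let X be a compact metric space and f : X → X a 1-Lipschitz map. Then for every x ∈ X there is a unique point y in the eventual image ⋂_{n ∈ ℕ} f^[n](X) such that dist(f^[n](x), f^[n](y)) tends to 0 as n → ∞. -/

import Mathlib

open Set Filter Metric Function

set_option linter.unusedSectionVars false

namespace AsympticAux

variable {X : Type*} [MetricSpace X] [CompactSpace X] {f : X → X}

/-- the eventual image -/
def E (f : X → X) : Set X := ⋂ n : ℕ, f^[n] '' univ

lemma lip_iter (hf : LipschitzWith 1 f) (n : ℕ) : LipschitzWith 1 f^[n] := by
  simpa using hf.iterate n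

lemma dist_iter_le (hf : LipschitzWith 1 f) (n : ℕ) (a b : X) :
    dist (f^[n] a) (f^[n] b) ≤ dist a b := by
  simpa using (lip_iter hf n).dist_le_mul a b

lemma K_compact (hf : LipschitzWith 1 f) (n : ℕ) : IsCompact (f^[n] '' univ) :=
  isCompact_univ.image (hf.continuous.iterate n)

lemma K_anti (n : ℕ) : f^[n+1] '' univ ⊆ f^[n] '' univ := by
  rw [Function.iterate_succ, Set.image_comp]
  exact Set.image_mono (subset_univ _)

lemma E_nonempty [Nonempty X] (hf : LipschitzWith 1 f) : (E f).Nonempty := by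
  apply IsCompact.nonempty_iInter_of_sequence_nonempty_isCompact_isClosed
    (fun n => f^[n] '' univ) K_anti
    (fun n => (Set.univ_nonempty).image _)
    (K_compact hf 0)
    (fun n => (K_compact hf n).isClosed)

lemma E_closed (hf : LipschitzWith 1 f) : IsClosed (E f) :=
  isClosed_iInter fun n => (K_compact hf n).isClosed

lemma E_compact (hf : LipschitzWith 1 f) : IsCompact (E f) :=
  (E_closed hf).isCompact

lemma mapsTo_E (a : X) (ha : a ∈ E f) : f a ∈ E f := by
  rw [E, Set.mem_iInter] at *
  intro n
  obtain ⟨u, -, hu⟩ := ha n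
  exact ⟨f u, mem_univ _, by rw [← hu, ← Function.iterate_succ_apply, Function.iterate_succ_apply']⟩

lemma mapsTo_E_iter (a : X) (ha : a ∈ E f) (n : ℕ) : f^[n] a ∈ E f := by
  induction n with
  | zero => simpa
  | succ n ih => rw [Function.iterate_succ_apply']; exact mapsTo_E _ ih

lemma surjOn_E (hf : LipschitzWith 1 f) (z : X) (hz : z ∈ E f) : ∃ w ∈ E f, f w = z := by
  have h : (⋂ n : ℕ, (f^[n] '' univ ∩ f ⁻¹' {z})).Nonempty := by
    apply IsCompact.nonempty_iInter_of_sequence_nonempty_isCompact_isClosed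
    · intro n
      exact inter_subset_inter_left _ (K_anti n)
    · intro n
      rw [E, Set.mem_iInter] at hz
      obtain ⟨u, -, hu⟩ := hz (n + 1)
      refine ⟨f^[n] u, ⟨⟨u, mem_univ _, rfl⟩, ?_⟩⟩
      simp only [Set.mem_preimage, Set.mem_singleton_iff]
      rw [← hu, Function.iterate_succ_apply']
    · exact ((K_compact hf 0).inter_right (isClosed_singleton.preimage hf.continuous))
    · exact fun n => ((K_compact hf n).isClosed.inter (isClosed_singleton.preimage hf.continuous))
  obtain ⟨w, hw⟩ := h
  rw [Set.mem_iInter] at hw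
  refine ⟨w, Set.mem_iInter.2 fun n => (hw n).1, (hw 0).2⟩


lemma exists_section (hf : LipschitzWith 1 f) :
    ∃ g : X → X, ∀ z ∈ E f, g z ∈ E f ∧ f (g z) = z := by
  have h : ∀ z : X, ∃ w : X, z ∈ E f → (w ∈ E f ∧ f w = z) := by
    intro z
    by_cases hz : z ∈ E f
    · obtain ⟨w, hw, hfw⟩ := surjOn_E hf z hz
      exact ⟨w, fun _ => ⟨hw, hfw⟩⟩
    · exact ⟨z, fun h => absurd h hz⟩
  choose g hg using h
  exact ⟨g, fun z hz => hg z hz⟩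

variable {g : X → X}

lemma g_iter (hg : ∀ z ∈ E f, g z ∈ E f ∧ f (g z) = z) (n : ℕ) (z : X) (hz : z ∈ E f) :
    g^[n] z ∈ E f ∧ f^[n] (g^[n] z) = z := by
  induction n with
  | zero => exact ⟨hz, rfl⟩
  | succ n ih =>
    rw [Function.iterate_succ_apply' g]
    refine ⟨(hg _ ih.1).1, ?_⟩
    rw [Function.iterate_succ_apply, (hg _ ih.1).2, ih.2]

lemma g_expand (hf : LipschitzWith 1 f) (hg : ∀ z ∈ E f, g z ∈ E f ∧ f (g z) = z)
    (n : ℕ) (u v : X) (hu : u ∈ E f) (hv : v ∈ E f) :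
    dist u v ≤ dist (g^[n] u) (g^[n] v) := by
  calc dist u v = dist (f^[n] (g^[n] u)) (f^[n] (g^[n] v)) := by
        rw [(g_iter hg n u hu).2, (g_iter hg n v hv).2]
    _ ≤ dist (g^[n] u) (g^[n] v) := dist_iter_le hf n _ _

lemma isometry_on_E (hf : LipschitzWith 1 f) (hg : ∀ z ∈ E f, g z ∈ E f ∧ f (g z) = z)
    (a b : X) (ha : a ∈ E f) (hb : b ∈ E f) :
    dist (f a) (f b) = dist a b := by
  refine le_antisymm (by simpa using hf.dist_le_mul a b) ?_
  have key : ∀ ε > (0:ℝ), dist a b ≤ dist (f a) (f b) + 2*ε := by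
    intro ε hε
    set u : ℕ → X × X := fun n => (g^[n] a, g^[n] b) with hu
    obtain ⟨p, -, φ, hφ, hconv⟩ := isCompact_univ.tendsto_subseq (fun n => Set.mem_univ (u n))
    have hcs : CauchySeq (u ∘ φ) := hconv.cauchySeq
    rw [Metric.cauchySeq_iff'] at hcs
    obtain ⟨N, hN⟩ := hcs ε hε
    have hlt := hN (N+1) (by omega)
    set k := φ N with hk
    set l := φ (N+1) with hl
    have hkl : k < l := hφ (by omega)
    set m := l - k with hmdef
    have hm : 1 ≤ m := by omega
    have hlm : l = k + m := by omega
    rw [Prod.dist_eq] at hlt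
    simp only [Function.comp_apply, hu] at hlt
    have hda : dist (g^[l] a) (g^[k] a) < ε :=
      lt_of_le_of_lt (le_max_left _ _) hlt
    have hdb : dist (g^[l] b) (g^[k] b) < ε :=
      lt_of_le_of_lt (le_max_right _ _) hlt
    have pull : ∀ c, c ∈ E f → dist (g^[m] c) c ≤ dist (g^[l] c) (g^[k] c) := by
      intro c hc
      have h1 : f^[k] (g^[l] c) = g^[m] c := by
        rw [hlm, Function.iterate_add_apply g k m c, (g_iter hg k _ (g_iter hg m c hc).1).2]
      have h2 : f^[k] (g^[k] c) = c := (g_iter hg k c hc).2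
      calc dist (g^[m] c) c = dist (f^[k] (g^[l] c)) (f^[k] (g^[k] c)) := by rw [h1, h2]
        _ ≤ dist (g^[l] c) (g^[k] c) := dist_iter_le hf k _ _
    obtain ⟨q, hq⟩ : ∃ q, m = q + 1 := ⟨m - 1, by omega⟩
    have hfa : f (g^[m] a) = g^[q] a := by
      rw [hq, Function.iterate_succ_apply' g, (hg _ (g_iter hg q a ha).1).2]
    have hfb : f (g^[m] b) = g^[q] b := by
      rw [hq, Function.iterate_succ_apply' g, (hg _ (g_iter hg q b hb).1).2]
    have e1 : dist (f (g^[m] a)) (f a) ≤ dist (g^[m] a) a := by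
      simpa using hf.dist_le_mul (g^[m] a) a
    have e2 : dist (f (g^[m] b)) (f b) ≤ dist (g^[m] b) b := by
      simpa using hf.dist_le_mul (g^[m] b) b
    have t4 : dist (f (g^[m] a)) (f (g^[m] b)) ≤
        dist (f (g^[m] a)) (f a) + dist (f a) (f b) + dist (f b) (f (g^[m] b)) :=
      dist_triangle4 _ _ _ _
    have hma := lt_of_le_of_lt (pull a ha) hda
    have hmb := lt_of_le_of_lt (pull b hb) hdb
    have := g_expand hf hg q a b ha hb
    rw [← hfa, ← hfb] at this
    rw [dist_comm (f b) (f (g^[m] b))] at t4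
    linarith
  by_contra hcon
  push_neg at hcon
  obtain ⟨ε, hε, hlt⟩ : ∃ ε > (0:ℝ), dist (f a) (f b) + 2*ε < dist a b :=
    ⟨(dist a b - dist (f a) (f b))/4, by linarith, by linarith⟩
  exact absurd (key ε hε) (not_le.2 hlt)

lemma isometry_iter_on_E (hf : LipschitzWith 1 f) (hg : ∀ z ∈ E f, g z ∈ E f ∧ f (g z) = z)
    (n : ℕ) (a b : X) (ha : a ∈ E f) (hb : b ∈ E f) :
    dist (f^[n] a) (f^[n] b) = dist a b := by
  induction n with
  | zero => rfl
  | succ n ih =>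
    rw [Function.iterate_succ_apply', Function.iterate_succ_apply',
      isometry_on_E hf hg _ _ (mapsTo_E_iter a ha n) (mapsTo_E_iter b hb n), ih]

end AsympticAux
/-- For a 1-Lipschitz self-map `f` of a compact metric space `X` and any `x ∈ X`, there
is a unique point `y` of the eventual image `⋂ n, f^[n] '' univ` such that
`dist (f^[n] x) (f^[n] y) → 0` as `n → ∞`. -/
theorem exists_unique_asymptotic_point (X : Type*) [MetricSpace X] [CompactSpace X]
    (f : X → X) (hf : LipschitzWith 1 f) (x : X) :
    ∃! y : X, y ∈ (⋂ n : ℕ, f^[n] '' Set.univ) ∧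
      Filter.Tendsto (fun n : ℕ => dist (f^[n] x) (f^[n] y)) Filter.atTop (nhds 0) := by
  classical
  haveI : Nonempty X := ⟨x⟩
  have hEne : (AsympticAux.E f).Nonempty := AsympticAux.E_nonempty hf
  have hEcomp := AsympticAux.E_compact hf
  have hEclosed := AsympticAux.E_closed hf
  obtain ⟨g, hg⟩ := AsympticAux.exists_section hf
  have hchoice : ∀ n : ℕ, ∃ y ∈ AsympticAux.E f,
      Metric.infDist (f^[n] x) (AsympticAux.E f) = dist (f^[n] x) y :=
    fun n => hEcomp.exists_infDist_eq_dist hEne (f^[n] x)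
  choose y hyE hyd using hchoice
  set d : ℕ → ℝ := fun n => Metric.infDist (f^[n] x) (AsympticAux.E f) with hd
  have hdnonneg : ∀ n, 0 ≤ d n := fun n => Metric.infDist_nonneg
  have hdanti : Antitone d := by
    apply antitone_nat_of_succ_le
    intro n
    calc d (n+1) ≤ dist (f^[n+1] x) (f (y n)) :=
          Metric.infDist_le_dist_of_mem (AsympticAux.mapsTo_E _ (hyE n))
      _ ≤ dist (f^[n] x) (y n) := by
          rw [Function.iterate_succ_apply']
          simpa using hf.dist_le_mul (f^[n] x) (y n)
      _ = d n := (hyd n).symm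
  obtain ⟨z, -, φ, hφ, hconv⟩ := isCompact_univ.tendsto_subseq (fun n => Set.mem_univ (f^[n] x))
  have hzE : z ∈ AsympticAux.E f := by
    rw [AsympticAux.E, Set.mem_iInter]
    intro m
    apply (AsympticAux.K_compact hf m).isClosed.mem_of_tendsto hconv
    filter_upwards [Filter.eventually_ge_atTop m] with k hk
    have hkm : m ≤ φ k := le_trans hk hφ.le_apply
    obtain ⟨j, hj⟩ : ∃ j, φ k = m + j := ⟨φ k - m, by omega⟩
    exact ⟨f^[j] x, Set.mem_univ _, by
      simp only [Function.comp_apply]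
      rw [← Function.iterate_add_apply, ← hj]⟩
  have hd0 : Filter.Tendsto d Filter.atTop (nhds 0) := by
    rw [Metric.tendsto_atTop]
    intro ε hε
    rw [Metric.tendsto_atTop] at hconv
    obtain ⟨K, hK⟩ := hconv ε hε
    refine ⟨φ K, fun n hn => ?_⟩
    have h1 : d n ≤ d (φ K) := hdanti hn
    have h2 : d (φ K) ≤ dist (f^[φ K] x) z := Metric.infDist_le_dist_of_mem hzE
    have h3 := hK K le_rfl
    simp only [Function.comp_apply] at h3
    rw [Real.dist_0_eq_abs, abs_of_nonneg (hdnonneg n)]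
    linarith
  set w : ℕ → X := fun n => g^[n] (y n) with hw
  have hwE : ∀ n, w n ∈ AsympticAux.E f := fun n => (AsympticAux.g_iter hg n (y n) (hyE n)).1
  have hfw : ∀ n, f^[n] (w n) = y n := fun n => (AsympticAux.g_iter hg n (y n) (hyE n)).2
  have hbound : ∀ n m, n ≤ m → dist (w n) (w m) ≤ d n + d m := by
    intro n m hnm
    obtain ⟨j, hj⟩ : ∃ j, m = j + n := ⟨m - n, by omega⟩
    have hfm : f^[m] (w n) = f^[j] (y n) := by
      rw [hj, Function.iterate_add_apply, hfw n]
    have hfx : f^[m] x = f^[j] (f^[n] x) := by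
      rw [hj, Function.iterate_add_apply]
    calc dist (w n) (w m) = dist (f^[m] (w n)) (f^[m] (w m)) :=
          (AsympticAux.isometry_iter_on_E hf hg m _ _ (hwE n) (hwE m)).symm
      _ = dist (f^[j] (y n)) (y m) := by rw [hfm, hfw m]
      _ ≤ dist (f^[j] (y n)) (f^[m] x) + dist (f^[m] x) (y m) := dist_triangle _ _ _
      _ ≤ dist (y n) (f^[n] x) + d m := by
          have h := AsympticAux.dist_iter_le hf j (y n) (f^[n] x)
          have h2 : dist (f^[j] (y n)) (f^[m] x) ≤ dist (y n) (f^[n] x) := by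
            rw [hfx]; exact h
          have h3 : d m = dist (f^[m] x) (y m) := hyd m
          linarith
      _ = d n + d m := by rw [dist_comm, ← hyd n]
  have hcauchy : CauchySeq w := by
    refine cauchySeq_of_le_tendsto_0 (fun N => 2 * d N) (fun n m N hn hm => ?_) ?_
    · show dist (w n) (w m) ≤ 2 * d N
      have hdn : d n ≤ d N := hdanti hn
      have hdm : d m ≤ d N := hdanti hm
      rcases le_total n m with h | h
      · have := hbound n m h; linarith
      · have := hbound m n h; rw [dist_comm]; linarith
    · simpa using hd0.const_mul (2:ℝ)
  obtain ⟨y₀, hy₀⟩ := cauchySeq_tendsto_of_complete hcauchy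
  have hy₀E : y₀ ∈ AsympticAux.E f :=
    hEclosed.mem_of_tendsto hy₀ (Filter.Eventually.of_forall hwE)
  have htend0 : Filter.Tendsto (fun n : ℕ => dist (f^[n] x) (f^[n] y₀)) Filter.atTop (nhds 0) := by
    have h2 : Filter.Tendsto (fun n => dist (w n) y₀) Filter.atTop (nhds 0) :=
      tendsto_iff_dist_tendsto_zero.mp hy₀
    apply squeeze_zero (fun n => dist_nonneg) (fun n => ?_) (by simpa using hd0.add h2)
    calc dist (f^[n] x) (f^[n] y₀)
        ≤ dist (f^[n] x) (y n) + dist (y n) (f^[n] y₀) := dist_triangle _ _ _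
      _ = d n + dist (w n) y₀ := by
          rw [← hyd n, ← hfw n,
            AsympticAux.isometry_iter_on_E hf hg n _ _ (hwE n) hy₀E]
  refine ⟨y₀, ⟨hy₀E, htend0⟩, ?_⟩
  rintro y' ⟨hy'E, hy't⟩
  have hle : ∀ n, dist y' y₀ ≤ dist (f^[n] x) (f^[n] y') + dist (f^[n] x) (f^[n] y₀) := by
    intro n
    rw [← AsympticAux.isometry_iter_on_E hf hg n _ _ hy'E hy₀E,
      dist_comm (f^[n] x) (f^[n] y')]
    exact dist_triangle _ _ _
  have h0 : dist y' y₀ ≤ 0 :=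
    ge_of_tendsto (by simpa using hy't.add htend0) (Filter.Eventually.of_forall hle)
  exact dist_le_zero.mp h0
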